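/- arXiv:1807.00239 — 2 statements merged into one kernel-verified Lean document; each statement's English description precedes it below -/
import Mathlib

section
/- For every natural number p, the following identity of rational numbers holds: ∑_{j=0}^{p} (-1)^j · (2p)!! / ((2j)!! · (2p-2j+1)!!) = (-1)^p / (2p+1). -/
open Finset Nat

lemma dfas_aux : ∀ m : ℕ, ∀ k : ℕ,
    ∑ j ∈ Finset.range (m + 1),
      ((-1 : ℚ) ^ j * ((2 * (m + k))‼ : ℚ) /
        (((2 * j)‼ : ℚ) * ((2 * (m + k) - 2 * j + 1)‼ : ℚ)))
      = (-1 : ℚ) ^ m * ((2 * (m + k))‼ : ℚ) * (2 * k + 1) /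
        (((2 * m)‼ : ℚ) * ((2 * k + 1)‼ : ℚ) * (2 * (m + k) + 1)) := by
  intro m
  induction m with
  | zero =>
    intro k
    simp [Nat.doubleFactorial]
    have h1 : ((2 * k + 1)‼ : ℚ) ≠ 0 := by positivity
    have h2 : (2 * (k : ℚ) + 1) ≠ 0 := by positivity
    field_simp
  | succ m ih =>
    intro k
    have key := ih (k + 1)
    have hpk : m + (k + 1) = m + 1 + k := by omega
    rw [hpk] at key
    rw [Finset.sum_range_succ, key]
    have hsub : 2 * (m + 1 + k) - 2 * (m + 1) + 1 = 2 * k + 1 := by omega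
    rw [hsub]
    have e1 : ((2 * (k + 1) + 1)‼ : ℚ) = (2 * k + 3) * ((2 * k + 1)‼ : ℚ) := by
      have : 2 * (k + 1) + 1 = (2 * k + 1) + 2 := by ring
      rw [this, Nat.doubleFactorial_add_two]
      push_cast; ring
    have e2 : ((2 * (m + 1))‼ : ℚ) = (2 * m + 2) * ((2 * m)‼ : ℚ) := by
      have : 2 * (m + 1) = (2 * m) + 2 := by ring
      rw [this, Nat.doubleFactorial_add_two]
      push_cast; ring
    rw [e1, e2]
    have h1 : ((2 * k + 1)‼ : ℚ) ≠ 0 := by positivity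
    have h2 : ((2 * m)‼ : ℚ) ≠ 0 := by positivity
    have h3 : (2 * ((m : ℚ) + 1 + k) + 1) ≠ 0 := by positivity
    have h4 : (2 * (k : ℚ) + 3) ≠ 0 := by positivity
    have h5 : (2 * (m : ℚ) + 2) ≠ 0 := by positivity
    push_cast
    field_simp
    ring

/-- The elementary double factorial identity
`∑_{j=0}^{p} (-1)^j (2p)!! / ((2j)!! (2p-2j+1)!!) = (-1)^p / (2p+1)`. -/
theorem doubleFactorial_alternating_sum (p : ℕ) :
    ∑ j ∈ Finset.range (p + 1),
      ((-1 : ℚ) ^ j * ((2 * p)‼ : ℚ) / (((2 * j)‼ : ℚ) * ((2 * p - 2 * j + 1)‼ : ℚ)))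
      = (-1 : ℚ) ^ p / (2 * p + 1) := by
  have := dfas_aux p 0
  simp only [Nat.add_zero, Nat.mul_zero, Nat.zero_add] at this
  rw [this]
  have h1 : ((2 * p)‼ : ℚ) ≠ 0 := by positivity
  have h2 : (2 * (p : ℚ) + 1) ≠ 0 := by positivity
  simp [Nat.doubleFactorial]
  field_simp
end

section
/- For every integer k ≥ 1 and every integer l with 0 ≤ l ≤ k-1, the following identity of rational numbers holds: ∑_{i=l}^{k-1} (-1)^{i-l} · C(i,l) / (i! · (2k-2i-1)!! · 2^{i-l}) = (-1)^{k-1-l} / (l! · (k-1-l)! · (2k-2l-1) · 2^{k-1-l}), where C(i,l) denotes the binomial coefficient 'i choose l'. -/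
open Finset Nat

def gfun (r : ℕ) (x : ℚ) : ℚ := (r.factorial : ℚ) / ∏ s ∈ Finset.range (r+1), (x + s)

lemma gfun_prod_pos (x : ℚ) (hx : 0 < x) (n : ℕ) : 0 < ∏ s ∈ Finset.range n, (x + (s:ℚ)) :=
  Finset.prod_pos fun s _ => by positivity

lemma gfun_rec (r : ℕ) (x : ℚ) (hx : 0 < x) : gfun (r+1) x = gfun r x - gfun r (x+1) := by
  have hP := (gfun_prod_pos x hx (r+1)).ne'
  have hQ := (gfun_prod_pos (x+1) (by linarith) (r+1)).ne'
  have h1 : ∏ s ∈ Finset.range (r+2), (x + (s:ℚ)) =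
      (∏ s ∈ Finset.range (r+1), (x + (s:ℚ))) * (x + ((r:ℚ)+1)) := by
    rw [Finset.prod_range_succ]; push_cast; ring
  have h2 : ∏ s ∈ Finset.range (r+2), (x + (s:ℚ)) =
      (∏ s ∈ Finset.range (r+1), ((x+1) + (s:ℚ))) * x := by
    rw [Finset.prod_range_succ' (fun s => x + (s:ℚ)) (r+1)]
    push_cast
    rw [add_zero]
    exact congrArg (· * x) (Finset.prod_congr rfl fun s _ => by ring)
  have hx' : x ≠ 0 := hx.ne'
  have hxr : x + ((r:ℚ)+1) ≠ 0 := by positivity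
  have hQx : (∏ s ∈ Finset.range (r+1), ((x+1) + (s:ℚ))) * x
      = (∏ s ∈ Finset.range (r+1), (x + (s:ℚ))) * (x + ((r:ℚ)+1)) := by
    rw [← h2, h1]
  unfold gfun
  rw [h1, div_sub_div _ _ hP hQ, div_eq_div_iff (mul_ne_zero hP hxr) (mul_ne_zero hP hQ)]
  push_cast [Nat.factorial_succ]
  linear_combination (-(r.factorial:ℚ) * (∏ s ∈ Finset.range (r+1), (x + (s:ℚ)))) * hQx

lemma auxA : ∀ (m : ℕ) (x : ℚ), 0 < x →
    ∑ r ∈ Finset.range (m+1), (-1:ℚ)^r * ((m.choose r : ℕ):ℚ) * gfun r x = 1/(x+m) := by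
  intro m
  induction m with
  | zero => intro x hx; simp [gfun]
  | succ m ih =>
    intro x hx
    have hx1 : (0:ℚ) < x + 1 := by linarith
    rw [Finset.sum_range_succ' (fun r => (-1:ℚ)^r * (((m+1).choose r : ℕ):ℚ) * gfun r x) (m+1)]
    have hterm : ∀ r ∈ Finset.range (m+1),
        (-1:ℚ)^(r+1) * (((m+1).choose (r+1) : ℕ):ℚ) * gfun (r+1) x
        = ((-((-1:ℚ)^r * ((m.choose r : ℕ):ℚ) * gfun r x))
            + (-1:ℚ)^r * ((m.choose r : ℕ):ℚ) * gfun r (x+1))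
          + (-1:ℚ)^(r+1) * ((m.choose (r+1) : ℕ):ℚ) * gfun (r+1) x := by
      intro r _
      rw [Nat.choose_succ_succ, gfun_rec r x hx]
      push_cast; ring
    rw [Finset.sum_congr rfl hterm]
    rw [Finset.sum_add_distrib, Finset.sum_add_distrib, Finset.sum_neg_distrib]
    have e1 := ih x hx
    have e2 := ih (x+1) hx1
    have e3 : ∑ r ∈ Finset.range (m+1), (-1:ℚ)^(r+1) * ((m.choose (r+1) : ℕ):ℚ) * gfun (r+1) x
        = (∑ r ∈ Finset.range (m+1), (-1:ℚ)^r * ((m.choose r : ℕ):ℚ) * gfun r x)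
          - (-1:ℚ)^0 * ((m.choose 0 : ℕ):ℚ) * gfun 0 x := by
      have h4 := Finset.sum_range_succ' (fun r => (-1:ℚ)^r * ((m.choose r : ℕ):ℚ) * gfun r x) (m+1)
      have h5 : ∑ r ∈ Finset.range (m+2), (-1:ℚ)^r * ((m.choose r : ℕ):ℚ) * gfun r x
          = ∑ r ∈ Finset.range (m+1), (-1:ℚ)^r * ((m.choose r : ℕ):ℚ) * gfun r x := by
        rw [Finset.sum_range_succ]
        simp [Nat.choose_succ_self]
      rw [h5] at h4
      linarith [h4]
    rw [e3, e1, e2]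
    have hxm : x + (m:ℚ) ≠ 0 := by positivity
    have hxm1 : x + 1 + (m:ℚ) ≠ 0 := by positivity
    have h6 : x + ((m:ℚ)+1) = x + 1 + m := by ring
    simp only [Nat.choose_zero_right, Nat.cast_one, one_mul, mul_one]
    push_cast
    rw [h6]
    ring

lemma prod_half (r : ℕ) : ∏ s ∈ Finset.range (r+1), ((1:ℚ)/2 + (s:ℚ))
    = (((2*r+1)‼ : ℕ):ℚ) / 2^(r+1) := by
  induction r with
  | zero => simp [Nat.doubleFactorial]
  | succ r ih =>
    rw [Finset.prod_range_succ, ih]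
    have h : 2*(r+1)+1 = (2*r+1)+2 := by ring
    rw [h, Nat.doubleFactorial_add_two]
    push_cast
    field_simp
    ring

lemma gval (r : ℕ) : gfun r (1/2) = 2^(r+1) * (r.factorial:ℚ) / (((2*r+1)‼ : ℕ):ℚ) := by
  have hD : (((2*r+1)‼ : ℕ):ℚ) ≠ 0 := by
    exact_mod_cast (Nat.doubleFactorial_pos _).ne'
  rw [gfun, prod_half, div_div_eq_mul_div]
  ring

lemma Smain (m : ℕ) :
    ∑ j ∈ Finset.range (m+1),
      (-1:ℚ)^j / ((j.factorial:ℚ) * (((2*(m-j)+1)‼ : ℕ):ℚ) * 2^j)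
    = (-1:ℚ)^m / ((m.factorial:ℚ) * (2*(m:ℚ)+1) * 2^m) := by
  have hA := auxA m (1/2) (by norm_num)
  rw [← Finset.sum_range_reflect
    (fun j => (-1:ℚ)^j / ((j.factorial:ℚ) * (((2*(m-j)+1)‼ : ℕ):ℚ) * 2^j)) (m+1)]
  have hterm : ∀ j ∈ Finset.range (m+1),
      (-1:ℚ)^(m+1-1-j) / (((m+1-1-j).factorial:ℚ) * (((2*(m-(m+1-1-j))+1)‼ : ℕ):ℚ) * 2^(m+1-1-j))
      = ((-1:ℚ)^m / ((m.factorial:ℚ) * 2^(m+1)))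
        * ((-1:ℚ)^j * ((m.choose j : ℕ):ℚ) * gfun j (1/2)) := by
    intro j hj
    have hjm : j ≤ m := by simpa [Nat.lt_succ_iff] using hj
    have h1 : m+1-1-j = m - j := by omega
    have h2 : m - (m - j) = j := by omega
    rw [h1, h2, gval]
    have hsign : (-1:ℚ)^(m-j) = (-1:ℚ)^m * (-1:ℚ)^j := by
      have hmj : m + j = (m - j) + 2*j := by omega
      calc (-1:ℚ)^(m-j) = (-1:ℚ)^(m-j) * ((-1:ℚ)^2)^j := by norm_num
        _ = (-1:ℚ)^((m-j) + 2*j) := by rw [pow_add, pow_mul]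
        _ = (-1:ℚ)^(m+j) := by rw [← hmj]
        _ = (-1:ℚ)^m * (-1:ℚ)^j := by rw [pow_add]
    rw [hsign]
    have hfac : (m.choose j : ℚ) * (j.factorial:ℚ) * ((m-j).factorial:ℚ) = (m.factorial:ℚ) := by
      exact_mod_cast congrArg (Nat.cast : ℕ → ℚ) (Nat.choose_mul_factorial_mul_factorial hjm)
    have hD : (((2*j+1)‼ : ℕ):ℚ) ≠ 0 := by exact_mod_cast (Nat.doubleFactorial_pos _).ne'
    have hfj : ((m-j).factorial:ℚ) ≠ 0 := by exact_mod_cast (Nat.factorial_pos _).ne'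
    have hfm : ((m.factorial):ℚ) ≠ 0 := by exact_mod_cast (Nat.factorial_pos _).ne'
    have hpow2 : (2:ℚ)^j * 2^(m-j) = 2^m := by rw [← pow_add]; congr 1; omega
    field_simp
    rw [← hfac]
    linear_combination ((m.choose j : ℚ) * (j.factorial:ℚ) * ((m-j).factorial:ℚ)
      * (-2)) * hpow2
  rw [Finset.sum_congr rfl hterm, ← Finset.mul_sum, hA]
  have hfm : ((m.factorial):ℚ) ≠ 0 := by exact_mod_cast (Nat.factorial_pos _).ne'
  have h2m : (2*(m:ℚ)+1) ≠ 0 := by positivity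
  field_simp
  ring

/-- The coefficient identity matching the pull-back of Chern's transgression with
the boundary integrand:
`∑_{i=l}^{k-1} (-1)^{i-l} C(i,l) / (i! (2k-2i-1)!! 2^{i-l})
  = (-1)^{k-1-l} / (l! (k-1-l)! (2k-2l-1) 2^{k-1-l})`. -/
theorem chern_transgression_coefficient_identity (k l : ℕ) (hk : 1 ≤ k) (hl : l ≤ k - 1) :
    ∑ i ∈ Finset.Icc l (k - 1),
      ((-1 : ℚ) ^ (i - l) * (i.choose l : ℚ) /
        ((i.factorial : ℚ) * ((2 * k - 2 * i - 1)‼ : ℚ) * 2 ^ (i - l)))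
      = (-1 : ℚ) ^ (k - 1 - l) /
        ((l.factorial : ℚ) * ((k - 1 - l).factorial : ℚ) * ((2 * k - 2 * l - 1 : ℕ) : ℚ)
          * 2 ^ (k - 1 - l)) := by
  set m := k - 1 - l with hm
  have hIcc : Finset.Icc l (k-1) = Finset.Ico l k := by
    rw [← Finset.Ico_add_one_right_eq_Icc]; congr 1; omega
  rw [hIcc, Finset.sum_Ico_eq_sum_range]
  have hkl : k - l = m + 1 := by omega
  rw [hkl]
  have hterm : ∀ j ∈ Finset.range (m+1),
      (-1 : ℚ) ^ ((l+j) - l) * ((l+j).choose l : ℚ) /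
        (((l+j).factorial : ℚ) * ((2 * k - 2 * (l+j) - 1)‼ : ℚ) * 2 ^ ((l+j) - l))
      = (1/(l.factorial:ℚ)) *
        ((-1:ℚ)^j / ((j.factorial:ℚ) * (((2*(m-j)+1)‼ : ℕ):ℚ) * 2^j)) := by
    intro j hj
    have hjm : j ≤ m := by simpa [Nat.lt_succ_iff] using hj
    have h1 : (l+j) - l = j := by omega
    have h2 : 2 * k - 2 * (l+j) - 1 = 2*(m-j)+1 := by omega
    rw [h1, h2]
    have hfac : ((l+j).choose l : ℚ) * (l.factorial:ℚ) * (j.factorial:ℚ) = ((l+j).factorial:ℚ) := by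
      have h := Nat.choose_mul_factorial_mul_factorial (Nat.le_add_right l j)
      rw [Nat.add_sub_cancel_left] at h
      exact_mod_cast congrArg (Nat.cast : ℕ → ℚ) h
    have hD : (((2*(m-j)+1)‼ : ℕ):ℚ) ≠ 0 := by exact_mod_cast (Nat.doubleFactorial_pos _).ne'
    have hfl : ((l.factorial):ℚ) ≠ 0 := by exact_mod_cast (Nat.factorial_pos _).ne'
    have hfj : ((j.factorial):ℚ) ≠ 0 := by exact_mod_cast (Nat.factorial_pos _).ne'
    have hflj : (((l+j).factorial):ℚ) ≠ 0 := by exact_mod_cast (Nat.factorial_pos _).ne'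
    field_simp
    rw [← hfac]
  rw [Finset.sum_congr rfl hterm, ← Finset.mul_sum, Smain]
  have h3 : (2 * k - 2 * l - 1 : ℕ) = 2*m+1 := by omega
  rw [h3]
  have hfl : ((l.factorial):ℚ) ≠ 0 := by exact_mod_cast (Nat.factorial_pos _).ne'
  have hfm : ((m.factorial):ℚ) ≠ 0 := by exact_mod_cast (Nat.factorial_pos _).ne'
  have h2m : (2*(m:ℚ)+1) ≠ 0 := by positivity
  push_cast
  field_simp
end
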